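/- Law of large numbers for types: if t⃗ is a sequence of m i.i.d. samples from a probability mass function P on finite alphabet X and P_{t⃗} is its empirical type, then for any β > 0, Pr(D(P_{t⃗}‖P) > β) ≤ 2^{-m(β - |X|·log₂(m+1)/m)}. -/
import Mathlib


open Finset
open scoped Classical

/-- Empirical type of a sequence. -/
noncomputable def typeOf {α : Type*} [Fintype α] [DecidableEq α] {m : ℕ} (xv : Fin m → α) :
    α → ℝ :=
  fun a => ((Finset.univ.filter fun i => xv i = a).card : ℝ) / m

/-- Base-2 KL divergence. -/
noncomputable def KL {α : Type*} [Fintype α] (P Q : α → ℝ) : ℝ :=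
  ∑ x, P x * Real.logb 2 (P x / Q x)

section aux

variable {α : Type*} [Fintype α] [DecidableEq α] {m : ℕ}

lemma count_sum (t : Fin m → α) :
    ∑ a : α, (Finset.univ.filter fun i => t i = a).card = m := by
  have := Finset.card_eq_sum_card_fiberwise
    (s := (Finset.univ : Finset (Fin m))) (t := (Finset.univ : Finset α))
    (f := t) (fun x _ => Finset.mem_univ _)
  simpa using this.symm

lemma sum_comp_eq (t : Fin m → α) (F : α → ℝ) :
    ∑ k, F (t k) = ∑ a : α, ((Finset.univ.filter fun i => t i = a).card : ℝ) * F a := by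
  rw [← Finset.sum_fiberwise Finset.univ t (fun k => F (t k))]
  refine Finset.sum_congr rfl fun a _ => ?_
  rw [Finset.sum_congr rfl (fun k hk => by rw [(Finset.mem_filter.1 hk).2]),
    Finset.sum_const, nsmul_eq_mul]

lemma typeOf_nonneg (t : Fin m → α) (a : α) : 0 ≤ typeOf t a := by
  unfold typeOf; positivity

lemma typeOf_pos (hm : 0 < m) (t : Fin m → α) (k : Fin m) : 0 < typeOf t (t k) := by
  unfold typeOf
  apply div_pos _ (by exact_mod_cast hm)
  exact_mod_cast Finset.card_pos.2 ⟨k, by simp⟩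

lemma step1 (hm : 0 < m) (P : α → ℝ) (hP0 : ∀ x, 0 ≤ P x) {β : ℝ}
    (t : Fin m → α) (h : β < KL (typeOf t) P) :
    ∏ k, P (t k) ≤ (2:ℝ) ^ (-(m:ℝ) * β) * ∏ k, typeOf t (t k) := by
  by_cases hz : ∃ k, P (t k) = 0
  · obtain ⟨k, hk⟩ := hz
    rw [Finset.prod_eq_zero (Finset.mem_univ k) hk]
    exact mul_nonneg (Real.rpow_nonneg (by norm_num) _)
      (Finset.prod_nonneg fun k _ => typeOf_nonneg t (t k))
  · push_neg at hz
    have hPpos : ∀ k, 0 < P (t k) := fun k => (hP0 (t k)).lt_of_ne' (hz k)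
    have hQpos : ∀ k, 0 < typeOf t (t k) := typeOf_pos hm t
    have hra : ∀ k, 0 < P (t k) / typeOf t (t k) := fun k => div_pos (hPpos k) (hQpos k)
    have key : ∏ k, P (t k) = (∏ k, (P (t k) / typeOf t (t k))) * ∏ k, typeOf t (t k) := by
      rw [← Finset.prod_mul_distrib]
      exact Finset.prod_congr rfl fun k _ => (div_mul_cancel₀ _ (hQpos k).ne').symm
    rw [key]
    apply mul_le_mul_of_nonneg_right _ (Finset.prod_nonneg fun k _ => (hQpos k).le)
    have hprod : ∏ k, P (t k) / typeOf t (t k)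
        = (2:ℝ) ^ (∑ k, Real.logb 2 (P (t k) / typeOf t (t k))) := by
      rw [Real.rpow_sum_of_pos two_pos]
      exact Finset.prod_congr rfl fun k _ =>
        (Real.rpow_logb two_pos (by norm_num) (hra k)).symm
    rw [hprod]
    apply Real.rpow_le_rpow_of_exponent_le one_le_two
    -- the exponent equals -(m * KL)
    have hgroup := sum_comp_eq t (fun a => Real.logb 2 (P a / typeOf t a))
    have hKL : ∑ k, Real.logb 2 (P (t k) / typeOf t (t k)) = -((m:ℝ) * KL (typeOf t) P) := by
      rw [hgroup, KL, Finset.mul_sum, ← Finset.sum_neg_distrib]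
      refine Finset.sum_congr rfl fun a _ => ?_
      set N := (Finset.univ.filter fun i => t i = a).card with hN
      by_cases hN0 : N = 0
      · simp [hN0, typeOf, ← hN, div_zero, Real.logb_zero]
      · obtain ⟨i, hi⟩ : ∃ i, t i = a := by
          have := Finset.card_pos.1 (Nat.pos_of_ne_zero hN0)
          obtain ⟨i, hi⟩ := this
          exact ⟨i, (Finset.mem_filter.1 hi).2⟩
        have hPa : 0 < P a := hi ▸ hPpos i
        have hQa : 0 < typeOf t a := by
          unfold typeOf
          apply div_pos _ (by exact_mod_cast hm)
          exact_mod_cast Nat.pos_of_ne_zero hN0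
        have hty : typeOf t a = (N : ℝ) / m := rfl
        have hmN : (m : ℝ) * typeOf t a = (N : ℝ) := by
          rw [hty]; field_simp
        rw [Real.logb_div hPa.ne' hQa.ne', Real.logb_div hQa.ne' hPa.ne']
        rw [← mul_assoc, hmN]
        ring
    rw [hKL]
    have hmpos : (0:ℝ) < m := by exact_mod_cast hm
    nlinarith [h, hmpos]

lemma step2 (hm : 0 < m) :
    ∑ t : Fin m → α, ∏ k, typeOf t (t k) ≤ ((m:ℝ) + 1) ^ (Fintype.card α) := by
  classical
  set cnt : (Fin m → α) → (α → Fin (m+1)) := fun t a =>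
    ⟨(Finset.univ.filter fun i => t i = a).card,
      Nat.lt_succ_of_le (le_trans (Finset.card_filter_le _ _) (by simp))⟩ with hcnt
  rw [← Finset.sum_fiberwise Finset.univ cnt (fun t => ∏ k, typeOf t (t k))]
  calc ∑ g : α → Fin (m+1), ∑ t ∈ Finset.univ.filter fun t => cnt t = g,
          ∏ k, typeOf t (t k)
      ≤ ∑ _g : α → Fin (m+1), (1:ℝ) := by
        refine Finset.sum_le_sum fun g _ => ?_
        by_cases hne : (Finset.univ.filter fun t => cnt t = g).Nonempty
        · obtain ⟨t0, ht0⟩ := hne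
          have ht0g : cnt t0 = g := (Finset.mem_filter.1 ht0).2
          have hg : ∑ a : α, ((g a : ℕ) : ℝ) = m := by
            rw [← ht0g]
            exact_mod_cast congrArg (Nat.cast (R := ℝ)) (count_sum t0)
          have hsum1 : ∑ a : α, ((g a : ℕ) : ℝ) / m = 1 := by
            rw [← Finset.sum_div, hg]
            field_simp
          calc ∑ t ∈ Finset.univ.filter fun t => cnt t = g, ∏ k, typeOf t (t k)
              = ∑ t ∈ Finset.univ.filter fun t => cnt t = g,
                  ∏ k, ((g (t k) : ℕ) : ℝ) / m := by
                refine Finset.sum_congr rfl fun t ht => ?_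
                have htg : cnt t = g := (Finset.mem_filter.1 ht).2
                refine Finset.prod_congr rfl fun k _ => ?_
                rw [← htg]
                rfl
            _ ≤ ∑ t : Fin m → α, ∏ k, ((g (t k) : ℕ) : ℝ) / m := by
                apply Finset.sum_le_sum_of_subset_of_nonneg (Finset.filter_subset _ _)
                intro t _ _
                exact Finset.prod_nonneg fun k _ => by positivity
            _ = ∏ _k : Fin m, ∑ a : α, ((g a : ℕ) : ℝ) / m := by
                rw [← Fintype.piFinset_univ]
                exact Finset.sum_prod_piFinset Finset.univ
                  (fun (_ : Fin m) (a : α) => ((g a : ℕ) : ℝ) / m)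
            _ = 1 := by rw [Finset.prod_congr rfl fun k _ => hsum1, Finset.prod_const_one]
        · rw [Finset.not_nonempty_iff_eq_empty.1 hne, Finset.sum_empty]
          norm_num
    _ ≤ ((m:ℝ) + 1) ^ (Fintype.card α) := by
        rw [Finset.sum_const, Finset.card_univ, Fintype.card_fun, Fintype.card_fin]
        push_cast
        simp

end aux

theorem stmt18 {α : Type*} [Fintype α] [DecidableEq α] {m : ℕ} (hm : 0 < m)
    (P : α → ℝ) (hP0 : ∀ x, 0 ≤ P x) (hP1 : ∑ x, P x = 1)
    (β : ℝ) (hβ : 0 < β) :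
    (∑ t : Fin m → α, if β < KL (typeOf t) P then ∏ k, P (t k) else 0) ≤
      (2:ℝ) ^ (-(m:ℝ) * (β - (Fintype.card α : ℝ) * Real.logb 2 (m + 1) / m)) := by
  have hmpos : (0:ℝ) < m := by exact_mod_cast hm
  have h1 : (∑ t : Fin m → α, if β < KL (typeOf t) P then ∏ k, P (t k) else 0)
      ≤ ∑ t : Fin m → α, (2:ℝ) ^ (-(m:ℝ) * β) * ∏ k, typeOf t (t k) := by
    refine Finset.sum_le_sum fun t _ => ?_
    split_ifs with h
    · exact step1 hm P hP0 t h
    · exact mul_nonneg (Real.rpow_nonneg (by norm_num) _)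
        (Finset.prod_nonneg fun k _ => typeOf_nonneg t (t k))
  rw [← Finset.mul_sum] at h1
  have h2 : (2:ℝ) ^ (-(m:ℝ) * β) * (∑ t : Fin m → α, ∏ k, typeOf t (t k))
      ≤ (2:ℝ) ^ (-(m:ℝ) * β) * ((m:ℝ) + 1) ^ (Fintype.card α) :=
    mul_le_mul_of_nonneg_left (step2 hm) (Real.rpow_nonneg (by norm_num) _)
  have hRHS : (2:ℝ) ^ (-(m:ℝ) * (β - (Fintype.card α : ℝ) * Real.logb 2 (m + 1) / m))
      = (2:ℝ) ^ (-(m:ℝ) * β) * ((m:ℝ) + 1) ^ (Fintype.card α) := by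
    have hexp : -(m:ℝ) * (β - (Fintype.card α : ℝ) * Real.logb 2 (m + 1) / m)
        = -(m:ℝ) * β + Real.logb 2 ((m:ℝ) + 1) * (Fintype.card α : ℝ) := by
      field_simp
      ring
    have hpow : (2:ℝ) ^ (Real.logb 2 ((m:ℝ) + 1) * (Fintype.card α : ℝ))
        = ((m:ℝ) + 1) ^ (Fintype.card α) := by
      rw [Real.rpow_mul (by norm_num), Real.rpow_logb two_pos (by norm_num) (by positivity),
        Real.rpow_natCast]
    rw [hexp, Real.rpow_add two_pos, hpow]
  rw [hRHS]
  exact h1.trans h2
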